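/- Let w ∈ S_n and let T be a set-valued Rothe tableau of shape D(w) flagged by (1,2,...,n). If (i,j) ∈ D(w) and every row index t with 1 ≤ t < i satisfies (t,j) ∈ D(w), then T(t,j) = {t} for all 1 ≤ t ≤ i. -/
import Mathlib


open Finset

/-- The Rothe diagram of `w` (0-based): squares `(i,j)` with `w i > j` and `w⁻¹ j > i`. -/
def RD {n : ℕ} (w : Equiv.Perm (Fin n)) : Finset (Fin n × Fin n) :=
  Finset.univ.filter (fun p => p.2 < w p.1 ∧ p.1 < w⁻¹ p.2)

/-- `m_{ij}(w)`: the number of squares of `D(w)` in row `i` weakly left of column `j`. -/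
def mStat {n : ℕ} (w : Equiv.Perm (Fin n)) (i j : Fin n) : ℕ :=
  ((RD w).filter (fun p => p.1 = i ∧ p.2 ≤ j)).card

/-- A set-valued Rothe tableau of shape `D(w)` flagged by `(1,2,…,n)`:
each square of `D(w)` carries a finite nonempty set of positive integers,
rows are weakly decreasing (for `j < j'` in a row, `max T(i,j') ≤ min T(i,j)`),
columns are strictly increasing, and every entry in (0-based) row `i` is `≤ i+1`. -/
def IsSVRT {n : ℕ} (w : Equiv.Perm (Fin n)) (T : Fin n × Fin n → Finset ℕ) : Prop :=
  (∀ p ∈ RD w, (T p).Nonempty) ∧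
  (∀ i j j' : Fin n, j < j' → (i, j) ∈ RD w → (i, j') ∈ RD w →
      ∀ a ∈ T (i, j'), ∀ b ∈ T (i, j), a ≤ b) ∧
  (∀ i i' j : Fin n, i < i' → (i, j) ∈ RD w → (i', j) ∈ RD w →
      ∀ a ∈ T (i, j), ∀ b ∈ T (i', j), a < b) ∧
  (∀ p ∈ RD w, ∀ a ∈ T p, 1 ≤ a ∧ a ≤ (p.1 : ℕ) + 1)

/-- If `(i,j) ∈ D(w)` and every square `(t,j)` with `t < i` is in `D(w)`, then
`T(t,j) = {t}` (1-based value `t+1` for 0-based row `t`) for all `t ≤ i`. -/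
theorem stmt5 {n : ℕ} (w : Equiv.Perm (Fin n)) (T : Fin n × Fin n → Finset ℕ)
    (hT : IsSVRT w T) (i j : Fin n) (hij : (i, j) ∈ RD w)
    (hcol : ∀ t : Fin n, t < i → (t, j) ∈ RD w) :
    ∀ t : Fin n, t ≤ i → T (t, j) = {(t : ℕ) + 1} := by
  obtain ⟨hne, hrow, hcolS, hflag⟩ := hT
  suffices H : ∀ m : ℕ, ∀ t : Fin n, (t : ℕ) = m → t ≤ i → T (t, j) = {(t : ℕ) + 1} by
    intro t ht; exact H t t rfl ht
  intro m
  induction m using Nat.strong_induction_on with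
  | _ m IH =>
    intro t htm ht
    have htj : (t, j) ∈ RD w := by
      rcases lt_or_eq_of_le ht with h | h
      · exact hcol t h
      · rw [h]; exact hij
    have hkey : ∀ a ∈ T (t, j), a = (t : ℕ) + 1 := by
      intro a ha
      have hub : a ≤ (t : ℕ) + 1 := (hflag _ htj a ha).2
      have hlb : (t : ℕ) + 1 ≤ a := by
        rcases Nat.eq_zero_or_pos (t : ℕ) with h0 | h0
        · have := (hflag _ htj a ha).1; omega
        · set s : Fin n := ⟨(t : ℕ) - 1, lt_trans (Nat.sub_lt h0 one_pos) t.isLt⟩ with hs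
          have hst : s < t := by
            simp only [Fin.lt_def, hs]; exact Nat.sub_lt h0 one_pos
          have hsi : s < i := lt_of_lt_of_le hst ht
          have hsT : T (s, j) = {(s : ℕ) + 1} := by
            apply IH (s : ℕ)
            · rw [← htm]; exact hst
            · rfl
            · exact le_of_lt hsi
          have := hcolS s t j hst (hcol s hsi) htj ((s : ℕ) + 1) (by rw [hsT]; simp) a ha
          have hsv : (s : ℕ) + 1 = (t : ℕ) := Nat.succ_pred_eq_of_pos h0
          omega
      omega
    obtain ⟨a, ha⟩ := hne _ htj
    have := hkey a ha
    subst this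
    exact Finset.eq_singleton_iff_unique_mem.mpr ⟨ha, hkey⟩
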